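/- Lossless convexification of regularized covariance steering (single-stage KKT form). Let A be an invertible n×n real matrix, B an n×m real matrix, R an m×m symmetric positive definite matrix, Σ an n×n symmetric positive definite matrix, U an m×n real matrix, Y an m×m symmetric positive semidefinite matrix with Y ≠ 0, Λ an n×n symmetric real matrix, Γ an m×m symmetric positive semidefinite matrix, v ∈ ℝᵐ a vector, and c ≥ 0, η ≥ 0 real scalars. Suppose the following KKT conditions hold: (i) stationarity in U: Γ U Σ⁻¹ + Bᵀ Λ A = 0; (ii) stationarity in Y: R + (c/‖Y‖_F) Y − Γ + η v vᵀ + Bᵀ Λ B = 0, where ‖Y‖_F is the Frobenius norm of Y; (iii) primal feasibility: Y − U Σ⁻¹ Uᵀ is positive semidefinite; (iv) complementary slackness: tr(Γ (U Σ⁻¹ Uᵀ − Y)) = 0. Then Y = U Σ⁻¹ Uᵀ, i.e., the semidefinite relaxation is tight. -/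

import Mathlib

open Matrix

private lemma quad_vecMulVec {m : ℕ} (v x : Fin m → ℝ) :
    x ⬝ᵥ (vecMulVec v v) *ᵥ x = (v ⬝ᵥ x) ^ 2 := by
  have h : (vecMulVec v v) *ᵥ x = (v ⬝ᵥ x) • v := by
    funext i
    simp [vecMulVec_apply, mulVec, dotProduct, Finset.mul_sum, mul_comm, mul_left_comm]
  rw [h, dotProduct_smul, smul_eq_mul, dotProduct_comm, sq]

/-- Lossless convexification of regularized covariance steering
(single-stage KKT form). Under the stationarity, primal feasibility, and complementary
slackness KKT conditions, the semidefinite relaxation `Y ⪰ U Σ⁻¹ Uᵀ` is tight: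
`Y = U Σ⁻¹ Uᵀ`. -/
theorem lossless_convexification_regularized_covariance_steering
    {n m : ℕ}
    (A : Matrix (Fin n) (Fin n) ℝ) (hA : IsUnit A.det)
    (B : Matrix (Fin n) (Fin m) ℝ)
    (R : Matrix (Fin m) (Fin m) ℝ) (hR : R.PosDef)
    (S : Matrix (Fin n) (Fin n) ℝ) (hS : S.PosDef)
    (U : Matrix (Fin m) (Fin n) ℝ)
    (Y : Matrix (Fin m) (Fin m) ℝ) (hY : Y.PosSemidef) (hY0 : Y ≠ 0)
    (Λ : Matrix (Fin n) (Fin n) ℝ) (hΛ : Λ.IsSymm)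
    (Γ : Matrix (Fin m) (Fin m) ℝ) (hΓ : Γ.PosSemidef)
    (v : Fin m → ℝ) (c η : ℝ) (hc : 0 ≤ c) (hη : 0 ≤ η)
    -- (i) stationarity in `U`
    (hstatU : Γ * U * S⁻¹ + Bᵀ * Λ * A = 0)
    -- (ii) stationarity in `Y`, where `√(tr (Yᵀ Y))` is the Frobenius norm of `Y`
    (hstatY : R + (c / Real.sqrt ((Yᵀ * Y).trace)) • Y - Γ + η • vecMulVec v v
        + Bᵀ * Λ * B = 0)
    -- (iii) primal feasibility
    (hprimal : (Y - U * S⁻¹ * Uᵀ).PosSemidef)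
    -- (iv) complementary slackness
    (hslack : (Γ * (U * S⁻¹ * Uᵀ - Y)).trace = 0) :
    Y = U * S⁻¹ * Uᵀ := by
  set s : ℝ := c / Real.sqrt ((Yᵀ * Y).trace) with hs_def
  have hs : 0 ≤ s := div_nonneg hc (Real.sqrt_nonneg _)
  have hΓsymm : Γᵀ = Γ := hΓ.1
  -- Step 1 : BᵀΛB = -(Γ * (U * S⁻¹ * (A⁻¹ * B)))
  have hBΛA : Bᵀ * Λ * A = -(Γ * U * S⁻¹) := by
    have := hstatU
    linear_combination (norm := noncomm_ring) this
  have hBΛB : Bᵀ * Λ * B = -(Γ * (U * S⁻¹ * (A⁻¹ * B))) := by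
    have h1 : Bᵀ * Λ * A * (A⁻¹ * B) = -(Γ * U * S⁻¹) * (A⁻¹ * B) := by rw [hBΛA]
    have h2 : Bᵀ * Λ * A * (A⁻¹ * B) = Bᵀ * Λ * B := by
      rw [show Bᵀ * Λ * A * (A⁻¹ * B) = Bᵀ * Λ * (A * A⁻¹) * B by
          simp only [Matrix.mul_assoc],
        Matrix.mul_nonsing_inv A hA, Matrix.mul_one]
    rw [← h2, h1, Matrix.neg_mul]
    simp only [Matrix.mul_assoc]
  -- Step 2 : Γ is positive definite
  have hΓpd : Γ.PosDef := by
    refine posDef_iff_dotProduct_mulVec.mpr ⟨hΓ.1, fun x hx => ?_⟩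
    by_contra hle
    push_neg at hle
    have hq0 : star x ⬝ᵥ Γ *ᵥ x = 0 := le_antisymm hle (hΓ.dotProduct_mulVec_nonneg x)
    have hΓx : Γ *ᵥ x = 0 := (hΓ.dotProduct_mulVec_zero_iff x).mp hq0
    have hq := congrArg (fun M => x ⬝ᵥ M *ᵥ x) hstatY
    simp only [hBΛB] at hq
    simp only [add_mulVec, sub_mulVec, smul_mulVec, neg_mulVec,
      dotProduct_add, dotProduct_sub, dotProduct_smul, dotProduct_neg,
      zero_mulVec, dotProduct_zero, smul_eq_mul] at hq
    have hΓterm : x ⬝ᵥ Γ *ᵥ x = 0 := by simpa using hq0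
    have hMterm : x ⬝ᵥ (Γ * (U * S⁻¹ * (A⁻¹ * B))) *ᵥ x = 0 := by
      rw [← Matrix.mulVec_mulVec, Matrix.dotProduct_mulVec, ← Matrix.mulVec_transpose,
        hΓsymm, hΓx]
      simp
    have hRpos : 0 < x ⬝ᵥ R *ᵥ x := by simpa using hR.dotProduct_mulVec_pos hx
    have hYterm : 0 ≤ x ⬝ᵥ Y *ᵥ x := by simpa using hY.dotProduct_mulVec_nonneg x
    have hvterm : x ⬝ᵥ (vecMulVec v v) *ᵥ x = (v ⬝ᵥ x) ^ 2 := quad_vecMulVec v x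
    rw [hΓterm, hMterm, hvterm] at hq
    nlinarith [sq_nonneg (v ⬝ᵥ x), mul_nonneg hs hYterm]
  -- Step 3 : trace (Γ * D) = 0 where D = Y - U S⁻¹ Uᵀ
  set D : Matrix (Fin m) (Fin m) ℝ := Y - U * S⁻¹ * Uᵀ with hD_def
  have htr : (Γ * D).trace = 0 := by
    have : Γ * D = -(Γ * (U * S⁻¹ * Uᵀ - Y)) := by rw [hD_def]; noncomm_ring
    rw [this, Matrix.trace_neg, hslack, neg_zero]
  -- Step 4 : D = 0
  obtain ⟨Q, hQ2, hQsymm⟩ : ∃ Q : Matrix (Fin m) (Fin m) ℝ, Q * Q = D ∧ Qᵀ = Q := by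
    open scoped MatrixOrder in
    exact ⟨CFC.sqrt D, CFC.sqrt_mul_sqrt_self D hprimal.nonneg, (CFC.sqrt_nonneg D).posSemidef.1⟩
  have hN : (Q * Γ * Q).trace = 0 := by
    rw [← Matrix.trace_mul_cycle, show Γ * Q * Q = Γ * D by rw [← hQ2]; noncomm_ring] at *
    exact htr
  have hNpsd : (Q * Γ * Q).PosSemidef := by
    have := hΓ.mul_mul_conjTranspose_same Q
    simpa [hQsymm] using this
  have hdiag : ∀ i, (Q * Γ * Q) i i = 0 := by
    intro i
    have hnn : ∀ j ∈ Finset.univ, 0 ≤ (Q * Γ * Q) j j := by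
      intro j _
      have := hNpsd.dotProduct_mulVec_nonneg (Pi.single j 1)
      simpa [dotProduct, mulVec, Pi.single_apply, Finset.sum_ite_eq, mul_apply] using this
    have := (Finset.sum_eq_zero_iff_of_nonneg hnn).mp (by simpa [Matrix.trace, Matrix.diag] using hN)
    exact this i (Finset.mem_univ i)
  have hQcol : ∀ i, (fun j => Q j i) = 0 := by
    intro i
    by_contra hne
    have hquad : (fun j => Q j i) ⬝ᵥ Γ *ᵥ (fun j => Q j i) = (Q * Γ * Q) i i := by
      simp only [dotProduct, mulVec, mul_apply, Finset.mul_sum, Finset.sum_mul]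
      rw [Finset.sum_comm]
      refine Finset.sum_congr rfl fun j _ => Finset.sum_congr rfl fun k _ => ?_
      have hsym : Q i k = Q k i := by have := congrFun (congrFun hQsymm k) i; simpa [Matrix.transpose_apply] using this
      rw [hsym]; ring
    have := hΓpd.dotProduct_mulVec_pos hne
    rw [show star (fun j => Q j i) = (fun j => Q j i) from star_trivial _, hquad, hdiag i] at this
    exact lt_irrefl 0 this
  have hQ0 : Q = 0 := by
    ext j i
    have := congrFun (hQcol i) j
    simpa using this
  have hD0 : D = 0 := by rw [← hQ2, hQ0, Matrix.mul_zero]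
  have := sub_eq_zero.mp hD0
  exact this
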